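/- Assume n = |p₁q₂ − p₂q₁| ≠ 0. Then the order of the image of (1, 0) in the quotient group (ℤ × ℤ)/Λ equals n / gcd(|q₁|, |q₂|). (In the language of the paper: the translation u acts on the n points of the fundamental region by a permutation all of whose cycles have length n/μ_q, where μ_q = gcd(|q₁|, |q₂|).) -/

import Mathlib

/-- Let `Λ ≤ ℤ × ℤ` be generated by `(p₁, q₁)` and `(p₂, q₂)`, and assume
`n = |p₁q₂ − p₂q₁| ≠ 0`.  Then the order of the image of `(1, 0)` in `(ℤ × ℤ)/Λ`
equals `n / gcd(|q₁|, |q₂|)`. -/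
theorem stmt5 (p₁ q₁ p₂ q₂ : ℤ) (hn : p₁ * q₂ - p₂ * q₁ ≠ 0) :
    addOrderOf ((QuotientAddGroup.mk ((1, 0) : ℤ × ℤ)) :
        (ℤ × ℤ) ⧸ AddSubgroup.closure {((p₁, q₁) : ℤ × ℤ), (p₂, q₂)})
      = (p₁ * q₂ - p₂ * q₁).natAbs / Nat.gcd q₁.natAbs q₂.natAbs := by
  set D : ℤ := p₁ * q₂ - p₂ * q₁ with hD
  set g : ℤ := (Int.gcd q₁ q₂ : ℤ) with hg
  have hq : ¬ (q₁ = 0 ∧ q₂ = 0) := by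
    rintro ⟨h1, h2⟩; exact hn (by rw [hD, h1, h2]; ring)
  have hg0 : g ≠ 0 := by
    simp only [hg, ne_eq, Int.natCast_eq_zero, Int.gcd_eq_zero_iff]
    exact hq
  have hgq1 : g ∣ q₁ := Int.gcd_dvd_left q₁ q₂
  have hgq2 : g ∣ q₂ := Int.gcd_dvd_right q₁ q₂
  obtain ⟨u, hu⟩ := hgq1
  obtain ⟨v, hv⟩ := hgq2
  have hgD : D = g * (p₁ * v - p₂ * u) := by rw [hD, hu, hv]; ring
  set e : ℤ := p₁ * v - p₂ * u with he
  have he0 : e ≠ 0 := by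
    intro h; rw [h, mul_zero] at hgD; exact hn hgD
  -- key characterization of (k, 0) ∈ Λ
  have key : ∀ k : ℤ, ((k, (0:ℤ)) : ℤ × ℤ) ∈
      AddSubgroup.closure {((p₁, q₁) : ℤ × ℤ), (p₂, q₂)} ↔ e ∣ k := by
    intro k
    rw [AddSubgroup.mem_closure_pair]
    constructor
    · rintro ⟨a, b, hab⟩
      have h1 : a * p₁ + b * p₂ = k := congrArg Prod.fst hab
      have h2 : a * q₁ + b * q₂ = 0 := congrArg Prod.snd hab
      -- Bezout
      set x : ℤ := Int.gcdA q₁ q₂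
      set y : ℤ := Int.gcdB q₁ q₂
      have hbez : g = q₁ * x + q₂ * y := Int.gcd_eq_gcd_ab q₁ q₂
      have hkey : k * g = (a * y - b * x) * D := by
        have : k * g = (a * p₁ + b * p₂) * (q₁ * x + q₂ * y) := by rw [h1, hbez]
        rw [this]
        have : (a * p₁ + b * p₂) * (q₁ * x + q₂ * y)
            = (a * y - b * x) * (p₁ * q₂ - p₂ * q₁)
              + (x * p₁ + y * p₂) * (a * q₁ + b * q₂) := by ring
        rw [this, h2, mul_zero, add_zero, hD]
      rw [hgD] at hkey
      refine ⟨a * y - b * x, ?_⟩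
      have := mul_right_cancel₀ hg0 (by linarith [hkey] : k * g = ((a * y - b * x) * e) * g)
      linarith
    · rintro ⟨t, rfl⟩
      refine ⟨t * v, -(t * u), ?_⟩
      ext
      · simp [smul_eq_mul, he]; ring
      · simp [smul_eq_mul, hu, hv]; ring
  -- now compute the order
  have hcoset : ∀ k : ℤ, k • ((QuotientAddGroup.mk ((1, 0) : ℤ × ℤ)) :
      (ℤ × ℤ) ⧸ AddSubgroup.closure {((p₁, q₁) : ℤ × ℤ), (p₂, q₂)}) = 0 ↔ e ∣ k := by
    intro k
    rw [← QuotientAddGroup.mk_zsmul, QuotientAddGroup.eq_zero_iff]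
    have : k • ((1, 0) : ℤ × ℤ) = (k, 0) := by
      ext <;> simp [smul_eq_mul]
    rw [this]
    exact key k
  have hm0 : 0 < e.natAbs := Int.natAbs_pos.mpr he0
  have horder : addOrderOf ((QuotientAddGroup.mk ((1, 0) : ℤ × ℤ)) :
      (ℤ × ℤ) ⧸ AddSubgroup.closure {((p₁, q₁) : ℤ × ℤ), (p₂, q₂)}) = e.natAbs := by
    rw [addOrderOf_eq_iff hm0]
    constructor
    · rw [← natCast_zsmul, hcoset]
      exact Int.dvd_natAbs.mpr dvd_rfl
    · intro m hmlt hm0' hcontra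
      rw [← natCast_zsmul, hcoset] at hcontra
      have : e.natAbs ∣ m := by
        have := Int.natAbs_dvd_natAbs.mpr hcontra
        simpa using this
      have := Nat.le_of_dvd hm0' this
      omega
  rw [horder]
  -- finally natAbs arithmetic
  have : D.natAbs = Nat.gcd q₁.natAbs q₂.natAbs * e.natAbs := by
    rw [hgD, Int.natAbs_mul]
    simp [hg, Int.gcd]
  have hgcd0 : 0 < Nat.gcd q₁.natAbs q₂.natAbs := by
    rcases Nat.eq_zero_or_pos (Nat.gcd q₁.natAbs q₂.natAbs) with h | h
    · rw [Nat.gcd_eq_zero_iff] at h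
      exact absurd ⟨Int.natAbs_eq_zero.mp h.1, Int.natAbs_eq_zero.mp h.2⟩ hq
    · exact h
  rw [this, Nat.mul_div_cancel_left _ hgcd0]
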